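/- Let M ∈ ℂ be nonzero and x ∈ ℂ satisfy -1 + 2M² - M⁴ - M²x ≠ 0. Let y be a square root of -1 + 2M² - M⁴ - M²x and set c = [[0, -M/y], [y/M, 0]], S = [[M, 1], [0, M⁻¹]], T = [[M, 0], [2 - M² - M⁻² - x, M⁻¹]]. Then c ∈ SL(2,ℂ), c² = -I, and c·S = T⁻¹·c. -/

import Mathlib

/-- With `y² = -1 + 2M² - M⁴ - M²x ≠ 0` and `c = [[0, -M/y],[y/M, 0]]`,
`c ∈ SL(2,ℂ)`, `c² = -I`, and `c·S = T⁻¹·c`. -/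
theorem c_props (M x y : ℂ) (hM : M ≠ 0)
    (hy : y ^ 2 = -1 + 2 * M ^ 2 - M ^ 4 - M ^ 2 * x)
    (hne : -1 + 2 * M ^ 2 - M ^ 4 - M ^ 2 * x ≠ 0) :
    (!![0, -M / y; y / M, 0] : Matrix (Fin 2) (Fin 2) ℂ).det = 1 ∧
    (!![0, -M / y; y / M, 0] : Matrix (Fin 2) (Fin 2) ℂ) *
        !![0, -M / y; y / M, 0] = -1 ∧
    (!![0, -M / y; y / M, 0] : Matrix (Fin 2) (Fin 2) ℂ) * !![M, 1; 0, M⁻¹]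
      = (!![M, 0; 2 - M ^ 2 - M ^ (-2 : ℤ) - x, M⁻¹] : Matrix (Fin 2) (Fin 2) ℂ)⁻¹ *
          !![0, -M / y; y / M, 0] := by
  have hy0 : y ≠ 0 := by
    intro h; apply hne; rw [← hy, h]; ring
  have hTinv : (!![M, 0; 2 - M ^ 2 - M ^ (-2 : ℤ) - x, M⁻¹] : Matrix (Fin 2) (Fin 2) ℂ)⁻¹
      = !![M⁻¹, 0; -(2 - M ^ 2 - M ^ (-2 : ℤ) - x), M] := by
    apply Matrix.inv_eq_right_inv
    ext i j
    fin_cases i <;> fin_cases j <;>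
      simp [Matrix.mul_apply, Fin.sum_univ_two, zpow_neg, zpow_ofNat] <;>
      field_simp <;> ring
  refine ⟨?_, ?_, ?_⟩
  · simp [Matrix.det_fin_two_of]
    field_simp
  · ext i j
    fin_cases i <;> fin_cases j <;>
      simp [Matrix.mul_apply, Fin.sum_univ_two, Matrix.one_apply] <;>
      field_simp <;> ring
  · rw [hTinv]
    ext i j
    fin_cases i <;> fin_cases j <;>
      simp [Matrix.mul_apply, Fin.sum_univ_two, zpow_neg, zpow_ofNat] <;>
      field_simp
    all_goals
      first
      | linear_combination (-M) * hy
      | linear_combination M * hy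
      | linear_combination (-(M + M ^ 2)) * hy
      | linear_combination (M + M ^ 2) * hy
      | linear_combination M ^ 2 * hy
      | linear_combination (-(M ^ 2)) * hy
      | linear_combination hy
      | ring
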